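/- On a 2-dimensional Riemannian manifold, every symmetric (0,2)-tensor field b is Riemann compatible: b(R(Y,Z)W, X) + b(R(Z,X)W, Y) + b(R(X,Y)W, Z) = 0 for all vector fields X, Y, Z, W. -/
import Mathlib

open RealInnerProductSpace

/-!
Pointwise formalization: on a 2-dimensional Riemannian manifold the Riemann tensor has
the constant-sectional-curvature form
`R(X,Y,Z,W) = κ (g(X,W) g(Y,Z) − g(X,Z) g(Y,W))` at every point, where `κ` is the Gauss
curvature at the point.  We model the tangent space as a 2-dimensional real inner
product space and the curvature as a vector-valued tensor `R X Y Z = R(X,Y)Z` with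
`⟪R(X,Y)Z, W⟫ = κ (⟪X,W⟫⟪Y,Z⟫ − ⟪X,Z⟫⟪Y,W⟫)`.
-/

/-- On a 2-dimensional Riemannian manifold every symmetric `(0,2)`-tensor `b` is Riemann
compatible: `b(R(Y,Z)W, X) + b(R(Z,X)W, Y) + b(R(X,Y)W, Z) = 0`. -/
theorem riemann_compatible_dim_two
    {V : Type*} [NormedAddCommGroup V] [InnerProductSpace ℝ V] [FiniteDimensional ℝ V]
    (hdim : Module.finrank ℝ V = 2)
    (R : V → V → V → V) (kappa : ℝ)
    (hR : ∀ X Y Z W : V,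
      ⟪R X Y Z, W⟫ = kappa * (⟪X, W⟫ * ⟪Y, Z⟫ - ⟪X, Z⟫ * ⟪Y, W⟫))
    (b : V →ₗ[ℝ] V →ₗ[ℝ] ℝ)
    (hbsymm : ∀ X Y : V, b X Y = b Y X) :
    ∀ X Y Z W : V, b (R Y Z W) X + b (R Z X W) Y + b (R X Y W) Z = 0 := by
  have hval : ∀ X Y Z : V, R X Y Z = kappa • (⟪Y, Z⟫ • X - ⟪X, Z⟫ • Y) := by
    intro X Y Z
    apply ext_inner_right ℝ
    intro T
    rw [hR]
    simp only [inner_smul_left, inner_sub_left, RCLike.ofReal_real_eq_id, id_eq,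
      starRingEnd_apply, star_trivial]
    ring
  intro X Y Z W
  simp only [hval, map_smul, map_sub, LinearMap.smul_apply, LinearMap.sub_apply,
    smul_eq_mul]
  rw [hbsymm Y X, hbsymm Z X, hbsymm Z Y]
  ring
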